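/- Let ū_h ∈ U, ȳ_h ∈ Y, and w̄_h ∈ W be such that αū_h is a subgradient of the norm ‖·‖_X at B*w̄_h (variational discretization); set ρ_y := Aȳ_h − Bū_h ∈ W* and D := (ζ̂ − αū_h)(B*(ŵ − w̄_h)), where ζ̂ is any subgradient of ‖·‖_X at B*ŵ. Then (1/2)‖Cȳ_h − g^δ‖_G² − (1/2)‖Cȳ − g^δ‖_G² ≤ (1/α)D + ‖C(A⁻¹ρ_y)‖_G · ‖Cȳ_h − g^δ‖_G. -/

import Mathlib

open RealInnerProductSpace NormedSpace

set_option maxHeartbeats 1000000 in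
/-- A posteriori estimate of the discrepancy functional error for Ivanov
regularization under variational discretization. -/
theorem stmt_12
    {X G Y W : Type*}
    [NormedAddCommGroup X] [NormedSpace ℝ X] [CompleteSpace X]
    [NormedAddCommGroup G] [InnerProductSpace ℝ G] [CompleteSpace G]
    [NormedAddCommGroup Y] [NormedSpace ℝ Y] [CompleteSpace Y]
    [NormedAddCommGroup W] [NormedSpace ℝ W] [CompleteSpace W]
    (A : Y ≃L[ℝ] StrongDual ℝ W) (Astar : W ≃L[ℝ] StrongDual ℝ Y)
    (hAadj : ∀ (y : Y) (w : W), A y w = Astar w y)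
    (Bstar : W →L[ℝ] X) (B : StrongDual ℝ X →L[ℝ] StrongDual ℝ W)
    (hB : ∀ (u : StrongDual ℝ X) (w : W), B u w = u (Bstar w))
    (C : Y →L[ℝ] G) (Cstar : G →L[ℝ] StrongDual ℝ Y)
    (hCadj : ∀ (y : Y) (g : G), ⟪C y, g⟫ = Cstar g y)
    (gδ : G) (α : ℝ) (hα : 0 < α)
    (ubar : StrongDual ℝ X) (ybar : Y)
    (hubar : ‖ubar‖ ≤ 1/α) (hybar : ybar = A.symm (B ubar))
    (hmin : ∀ u : StrongDual ℝ X, ‖u‖ ≤ 1/α →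
      (1/2) * ‖C ybar - gδ‖^2 ≤ (1/2) * ‖C (A.symm (B u)) - gδ‖^2)
    (yh : Y) (what : W)
    (hwhat : what = Astar.symm (-(Cstar (C yh - gδ))))
    (uh : StrongDual ℝ X) (wh : W)
    (hvar : ∀ x : X, (α • uh) x - (α • uh) (Bstar wh) ≤ ‖x‖ - ‖Bstar wh‖)
    (ζhat : StrongDual ℝ X)
    (hζhat : ∀ x : X, ζhat x - ζhat (Bstar what) ≤ ‖x‖ - ‖Bstar what‖) :
    (1/2) * ‖C yh - gδ‖^2 - (1/2) * ‖C ybar - gδ‖^2 ≤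
      (1/α) * ((ζhat - α • uh) (Bstar (what - wh)))
      + ‖C (A.symm (A yh - B uh))‖ * ‖C yh - gδ‖ := by
  set rh := C yh - gδ with hrh
  set rb := C ybar - gδ with hrb
  have hAw : Astar what = -(Cstar rh) := by
    rw [hwhat, Astar.apply_symm_apply]
  -- subgradient facts for α • uh at Bstar wh
  have huh_eq : (α • uh) (Bstar wh) = ‖Bstar wh‖ := by
    have h0 := hvar 0
    have h2 := hvar ((2:ℝ) • Bstar wh)
    rw [map_zero, norm_zero] at h0
    rw [map_smul, norm_smul] at h2
    simp only [smul_eq_mul, Real.norm_ofNat] at h2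
    linarith
  have huh_le : ∀ x : X, (α • uh) x ≤ ‖x‖ := by
    intro x
    have := hvar x
    linarith [huh_eq]
  -- subgradient facts for ζhat at Bstar what
  have hζ_eq : ζhat (Bstar what) = ‖Bstar what‖ := by
    have h0 := hζhat 0
    have h2 := hζhat ((2:ℝ) • Bstar what)
    rw [map_zero, norm_zero] at h0
    rw [map_smul, norm_smul] at h2
    simp only [smul_eq_mul, Real.norm_ofNat] at h2
    linarith
  have hζ_le : ∀ x : X, ζhat x ≤ ‖x‖ := by
    intro x
    have := hζhat x
    linarith [hζ_eq]
  -- bound on α * ubar (Bstar what)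
  have hub : α * ubar (Bstar what) ≤ ‖Bstar what‖ := by
    have h1 : ubar (Bstar what) ≤ ‖ubar‖ * ‖Bstar what‖ := by
      calc ubar (Bstar what) ≤ ‖ubar (Bstar what)‖ := le_abs_self _
        _ ≤ ‖ubar‖ * ‖Bstar what‖ := ubar.le_opNorm _
    have h2 : α * ‖ubar‖ ≤ 1 := by
      have := mul_le_mul_of_nonneg_left hubar (le_of_lt hα)
      rwa [mul_one_div, div_self (ne_of_gt hα)] at this
    nlinarith [norm_nonneg (Bstar what), norm_nonneg ubar]
  -- Step F
  have hF : ubar (Bstar what) - uh (Bstar what) ≤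
      (1/α) * ((ζhat - α • uh) (Bstar (what - wh))) := by
    rw [one_div, ← div_eq_inv_mul, le_div_iff₀ hα, mul_comm]
    have hexp : (ζhat - α • uh) (Bstar (what - wh)) =
        ζhat (Bstar what) - ζhat (Bstar wh) - (α • uh) (Bstar what)
          + (α • uh) (Bstar wh) := by
      rw [map_sub]
      simp only [ContinuousLinearMap.sub_apply, map_sub]
      ring
    have hs : (α • uh) (Bstar what) = α * uh (Bstar what) := by
      simp [ContinuousLinearMap.smul_apply]
    have hζwh : ζhat (Bstar wh) ≤ (α • uh) (Bstar wh) := by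
      rw [huh_eq]; exact hζ_le _
    rw [hexp]
    have := hζ_eq
    nlinarith [hub, hζwh, hs]
  -- Step A: quadratic estimate
  have keyA : (1/2) * ‖rh‖^2 - (1/2) * ‖rb‖^2 ≤ ⟪C (yh - ybar), rh⟫ := by
    have hC : C (yh - ybar) = rh - rb := by
      rw [map_sub, hrh, hrb]; abel
    have hinner : ⟪C (yh - ybar), rh⟫ = ‖rh‖^2 - ⟪rh, rb⟫ := by
      rw [hC, real_inner_comm, inner_sub_right, real_inner_self_eq_norm_sq]
    have hcs : ⟪rh, rb⟫ ≤ ‖rh‖ * ‖rb‖ := real_inner_le_norm _ _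
    have key : ∀ a b c : ℝ, c ≤ a * b → 1/2 * a^2 - 1/2 * b^2 ≤ a^2 - c := by
      intro a b c h
      nlinarith [sq_nonneg (a - b)]
    rw [hinner]
    exact key _ _ _ hcs
  -- identity for the middle term
  have hmid : ⟪C (yh - ybar), rh⟫ =
      -((A yh - B uh) what) + (ubar (Bstar what) - uh (Bstar what)) := by
    rw [hCadj]
    have h1 : Cstar rh (yh - ybar) = -(A (yh - ybar) what) := by
      rw [hAadj, hAw]
      simp
    rw [h1, map_sub, hybar, A.apply_symm_apply]
    simp only [ContinuousLinearMap.sub_apply, hB]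
    ring
  -- Step E: bound the residual term
  have hE : -((A yh - B uh) what) ≤ ‖C (A.symm (A yh - B uh))‖ * ‖rh‖ := by
    have h1 : (A yh - B uh) what = -⟪C (A.symm (A yh - B uh)), rh⟫ := by
      conv_lhs => rw [← A.apply_symm_apply (A yh - B uh)]
      rw [hAadj, hAw, hCadj]
      simp
    rw [h1, neg_neg]
    exact le_trans (real_inner_le_norm _ _) le_rfl
  linarith [keyA, hmid ▸ keyA, hE, hF]
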